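/- Let f ∈ (0,1) and κ, γ₁, γ₂, γ₃ > 0, and let x ∈ S₃ = (1/(1+γ₁), 1) be a root of the polynomial φ, i.e. φ(x) = 0. Then the point u* defined by u₃* = x, u₁* = κ·x²/(1+κ·x²), u₂* = f·κ·x²/(1+κ·x²), u₄* = (1−x)/(γ₁·x) satisfies F(u*) = 0 and lies in the open cube (0,1)⁴; i.e. every root of φ in S₃ yields a steady state of the ZIP regulatory system in the interior of [0,1]⁴. -/

import Mathlib

/-- The ZIP regulatory vector field on ℝ⁴ (components indexed by `Fin 4`). -/
noncomputable def zipField (κ γ₁ γ₂ γ₃ f : ℝ) (u : Fin 4 → ℝ) : Fin 4 → ℝ :=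
  ![κ * (u 2) ^ 2 * (1 - u 0) - u 0,
    u 0 * f - u 1,
    1 - γ₁ * u 2 * u 3 - u 2,
    γ₂ * u 1 - γ₃ * u 2 * u 3 - (1 + γ₂ * u 1) * u 3]

/-- The quartic polynomial φ whose roots in S₃ correspond to steady states. -/
noncomputable def zipPhi (κ γ₁ γ₂ γ₃ f : ℝ) (x : ℝ) : ℝ :=
  γ₃ * κ * x ^ 4 + (f * γ₂ * (1 + γ₁) + 1 - γ₃) * κ * x ^ 3 +
    (γ₃ - κ - f * γ₂ * κ) * x ^ 2 + (1 - γ₃) * x - 1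

/-- every root x of φ in S₃ = (1/(1+γ₁), 1) yields a steady state
of the ZIP regulatory system lying in the interior of the cube [0,1]⁴. -/
theorem zip_root_gives_steady_state
    (κ γ₁ γ₂ γ₃ f : ℝ) (hκ : 0 < κ) (hγ₁ : 0 < γ₁) (hγ₂ : 0 < γ₂) (hγ₃ : 0 < γ₃)
    (hf : f ∈ Set.Ioo (0 : ℝ) 1)
    (x : ℝ) (hx : x ∈ Set.Ioo (1 / (1 + γ₁)) 1) (hroot : zipPhi κ γ₁ γ₂ γ₃ f x = 0) :
    zipField κ γ₁ γ₂ γ₃ f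
      ![κ * x ^ 2 / (1 + κ * x ^ 2), f * κ * x ^ 2 / (1 + κ * x ^ 2), x,
        (1 - x) / (γ₁ * x)] = 0 ∧
    (∀ i, (![κ * x ^ 2 / (1 + κ * x ^ 2), f * κ * x ^ 2 / (1 + κ * x ^ 2), x,
        (1 - x) / (γ₁ * x)] : Fin 4 → ℝ) i ∈ Set.Ioo (0 : ℝ) 1) := by
  obtain ⟨hf0, hf1⟩ := hf
  obtain ⟨hx0, hx1⟩ := hx
  have h1γ : (0:ℝ) < 1 + γ₁ := by linarith
  have hxpos : 0 < x := lt_trans (by positivity) hx0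
  have hxg : 1 < (1 + γ₁) * x := by
    rw [div_lt_iff₀ h1γ] at hx0; linarith
  have hκx : 0 < κ * x ^ 2 := by positivity
  have hD : 0 < 1 + κ * x ^ 2 := by positivity
  have hDne : (1 + κ * x ^ 2) ≠ 0 := ne_of_gt hD
  have hγ₁ne : γ₁ ≠ 0 := ne_of_gt hγ₁
  have hxne : x ≠ 0 := ne_of_gt hxpos
  constructor
  · funext i
    fin_cases i <;> simp [zipField]
    · field_simp; ring
    · field_simp; ring
    · field_simp; ring
    · have hphi : zipPhi κ γ₁ γ₂ γ₃ f x = 0 := hroot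
      simp only [zipPhi] at hphi
      field_simp
      nlinarith [hphi, sq_nonneg x]
  · intro i
    fin_cases i <;> simp [Set.mem_Ioo]
    · constructor
      · positivity
      · rw [div_lt_one hD]; linarith
    · constructor
      · positivity
      · rw [div_lt_one hD]; nlinarith
    · exact ⟨hxpos, hx1⟩
    · constructor
      · apply div_pos (by linarith) (by positivity)
      · rw [div_lt_one (by positivity)]; nlinarith
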